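/- arXiv:2511.16558 — 2 statements merged into one kernel-verified Lean document; each statement's English description precedes it below -/
import Mathlib

section
/- For every z ∈ Φ_{m,n}, the total weight of perfect matchings of H with pattern z equals (∏_{j=1}^m C(k, z_j)) · Perm(A_z)², where C(k, z_j) is the binomial coefficient (and equals 0 when z_j > k). Moreover, every perfect matching M of H satisfies |S₁(M)| = n, so its pattern lies in Φ_{m,n}. -/
open scoped Classical

/-- `permA A z` is the permanent of the `n × n` matrix `A_z` formed by stacking `z j`
copies of row `j` of `A` for each `j`: the sum over all bijections `σ` from the rows of
`A_z` (indexed by `Σ j, Fin (z j)`) to the columns of `∏ i, A_{row(σ⁻¹ i), i}`. -/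
noncomputable def permA {m n : ℕ} (A : Matrix (Fin m) (Fin n) ℝ) (z : Fin m → ℕ) : ℝ :=
  ∑ σ : ((j : Fin m) × Fin (z j)) ≃ Fin n, ∏ i : Fin n, A (σ.symm i).1 i

/-- Vertices of the bipartite graph `H`: `(inl i, ℓ)` is the vertex `v_i^{(ℓ+1)} ∈ L_{ℓ+1}`
for `i ∈ [n]`, and `(inr (j,t), ℓ)` is the vertex `u_{j,t}^{(ℓ+1)} ∈ R_{ℓ+1}`. -/
abbrev BSVert (m n k : ℕ) := (Fin n ⊕ (Fin m × Fin k)) × Fin 2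

/-- The bipartite graph `H`: for each `ℓ ∈ {1,2}`, an edge `{v_i^{(ℓ)}, u_{j,t}^{(ℓ)}}`
whenever `A j i ≠ 0`, and a rung edge `{u_{j,t}^{(1)}, u_{j,t}^{(2)}}` for all `(j,t)`. -/
def BSGraph {m n : ℕ} (A : Matrix (Fin m) (Fin n) ℝ) (k : ℕ) :
    SimpleGraph (BSVert m n k) :=
  SimpleGraph.fromRel fun x y =>
    (∃ i j t ℓ, x = (Sum.inl i, ℓ) ∧ y = (Sum.inr (j, t), ℓ) ∧ A j i ≠ 0) ∨
    (∃ j t, x = (Sum.inr (j, t), (0 : Fin 2)) ∧ y = (Sum.inr (j, t), (1 : Fin 2)))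

/-- The weight of a pair of endpoints: `A j i` for an edge joining `v_i^{(ℓ)}` and
`u_{j,t}^{(ℓ)}`, and `1` otherwise (in particular rung edges have weight `1`). -/
def BSpairWt {m n k : ℕ} (A : Matrix (Fin m) (Fin n) ℝ) :
    BSVert m n k → BSVert m n k → ℝ := fun x y =>
  match x.1, y.1 with
  | Sum.inl i, Sum.inr (j, _) => A j i
  | Sum.inr (j, _), Sum.inl i => A j i
  | _, _ => 1

/-- The edge-weight function of `H` on unordered pairs. -/
noncomputable def BSedgeWt {m n k : ℕ} (A : Matrix (Fin m) (Fin n) ℝ) :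
    Sym2 (BSVert m n k) → ℝ :=
  Sym2.lift ⟨BSpairWt A, by
    rintro ⟨x1, x2⟩ ⟨y1, y2⟩
    rcases x1 with i | ⟨j, t⟩ <;> rcases y1 with i' | ⟨j', t'⟩ <;> rfl⟩

/-- The pattern `z ∈ ℕ^m` of a perfect matching `M` of `H`:
`z j = |S₁(M) ∩ ({j} × [k])|`, where `S₁(M)` is the set of `R₁`-vertices matched by `M`
to `L₁`-vertices. -/
noncomputable def BSpattern {m n k : ℕ} (M : Finset (Sym2 (BSVert m n k))) : Fin m → ℕ :=
  fun j => (Finset.univ.filter fun t : Fin k =>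
    ∃ i : Fin n, s((Sum.inl i, (0 : Fin 2)), (Sum.inr (j, t), (0 : Fin 2))) ∈ M).card

/-- `M` is a matching of `G`: a finite set of edges of `G` that are pairwise vertex-disjoint. -/
def IsMatchingSet {α : Type*} (G : SimpleGraph α) (M : Finset (Sym2 α)) : Prop :=
  (∀ e ∈ M, e ∈ G.edgeSet) ∧ ∀ e ∈ M, ∀ f ∈ M, e ≠ f → ∀ v, v ∈ e → v ∉ f

/-- The set of vertices covered by a set of edges `M`. -/
noncomputable def coveredBy {α : Type*} [Fintype α] (M : Finset (Sym2 α)) : Finset α :=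
  Finset.univ.filter fun v => ∃ e ∈ M, v ∈ e

section Aux
open Finset Sum
variable {m n k : ℕ} (A : Matrix (Fin m) (Fin n) ℝ)

lemma wt_mk (x y : BSVert m n k) : BSedgeWt A s(x, y) = BSpairWt A x y := rfl

lemma wt_level (i : Fin n) (q : Fin m × Fin k) (a b : Fin 2) :
    BSedgeWt A s(((inl i : Fin n ⊕ (Fin m × Fin k)), a), ((inr q : Fin n ⊕ (Fin m × Fin k)), b)) = A q.1 i := by
  obtain ⟨j, t⟩ := q; rfl

lemma wt_rung (q q' : Fin m × Fin k) (a b : Fin 2) :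
    BSedgeWt A s(((inr q : Fin n ⊕ (Fin m × Fin k)), a), ((inr q' : Fin n ⊕ (Fin m × Fin k)), b)) = 1 := by
  obtain ⟨j, t⟩ := q; obtain ⟨j', t'⟩ := q'; rfl

lemma adj_inl_iff (i : Fin n) (ℓ : Fin 2) (w : BSVert m n k) :
    (BSGraph A k).Adj ((inl i : Fin n ⊕ (Fin m × Fin k)), ℓ) w ↔
      ∃ q : Fin m × Fin k, w = ((inr q : Fin n ⊕ (Fin m × Fin k)), ℓ) ∧ A q.1 i ≠ 0 := by
  rw [BSGraph, SimpleGraph.fromRel_adj]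
  constructor
  · rintro ⟨hne, h | h⟩
    · rcases h with h | h
      · obtain ⟨i', j, t, ℓ', h1, rfl, h3⟩ := h
        simp only [Prod.mk.injEq, inl.injEq] at h1
        obtain ⟨rfl, rfl⟩ := h1
        exact ⟨(j, t), rfl, h3⟩
      · obtain ⟨j, t, h1, h2⟩ := h; simp at h1
    · rcases h with h | h
      · obtain ⟨i', j, t, ℓ', h1, h2, h3⟩ := h; simp at h2
      · obtain ⟨j, t, h1, h2⟩ := h; simp at h2
  · rintro ⟨q, rfl, hq⟩
    exact ⟨by simp, Or.inl (Or.inl ⟨i, q.1, q.2, ℓ, rfl, rfl, hq⟩)⟩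

lemma adj_inr_iff (q : Fin m × Fin k) (ℓ : Fin 2) (w : BSVert m n k) :
    (BSGraph A k).Adj ((inr q : Fin n ⊕ (Fin m × Fin k)), ℓ) w ↔
      (∃ i : Fin n, w = ((inl i : Fin n ⊕ (Fin m × Fin k)), ℓ) ∧ A q.1 i ≠ 0) ∨
        w = ((inr q : Fin n ⊕ (Fin m × Fin k)), ℓ + 1) := by
  rw [BSGraph, SimpleGraph.fromRel_adj]
  constructor
  · rintro ⟨hne, h | h⟩
    · rcases h with h | h
      · obtain ⟨i', j, t, ℓ', h1, rfl, h3⟩ := h; simp at h1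
      · obtain ⟨j, t, h1, rfl⟩ := h
        simp only [Prod.mk.injEq, inr.injEq] at h1
        obtain ⟨rfl, rfl⟩ := h1
        exact Or.inr rfl
    · rcases h with h | h
      · obtain ⟨i', j, t, ℓ', rfl, h2, h3⟩ := h
        simp only [Prod.mk.injEq, inr.injEq] at h2
        obtain ⟨rfl, rfl⟩ := h2
        exact Or.inl ⟨i', rfl, h3⟩
      · obtain ⟨j, t, rfl, h2⟩ := h
        simp only [Prod.mk.injEq, inr.injEq] at h2
        obtain ⟨rfl, rfl⟩ := h2
        exact Or.inr rfl
  · rintro (⟨i, rfl, hi⟩ | rfl)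
    · exact ⟨by simp, Or.inr (Or.inl ⟨i, q.1, q.2, ℓ, rfl, rfl, hi⟩)⟩
    · refine ⟨by simp [Prod.ext_iff, Fin.ext_iff], ?_⟩
      fin_cases ℓ
      · exact Or.inl (Or.inr ⟨q.1, q.2, rfl, rfl⟩)
      · exact Or.inr (Or.inr ⟨q.1, q.2, rfl, rfl⟩)

noncomputable def toM {m n k : ℕ} (f g : Fin n → Fin m × Fin k) : Finset (Sym2 (BSVert m n k)) :=
  (Finset.univ.image fun i : Fin n => s(((inl i : Fin n ⊕ (Fin m × Fin k)), (0 : Fin 2)), ((inr (f i) : Fin n ⊕ (Fin m × Fin k)), (0 : Fin 2)))) ∪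
  (Finset.univ.image fun i : Fin n => s(((inl i : Fin n ⊕ (Fin m × Fin k)), (1 : Fin 2)), ((inr (g i) : Fin n ⊕ (Fin m × Fin k)), (1 : Fin 2)))) ∪
  ((Finset.univ.image f)ᶜ.image fun q : Fin m × Fin k => s(((inr q : Fin n ⊕ (Fin m × Fin k)), (0 : Fin 2)), ((inr q : Fin n ⊕ (Fin m × Fin k)), (1 : Fin 2))))

lemma mem_toM {f g : Fin n → Fin m × Fin k} {e : Sym2 (BSVert m n k)} :
    e ∈ toM f g ↔
      (∃ i : Fin n, e = s(((inl i : Fin n ⊕ (Fin m × Fin k)), (0 : Fin 2)), ((inr (f i) : Fin n ⊕ (Fin m × Fin k)), (0 : Fin 2)))) ∨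
      (∃ i : Fin n, e = s(((inl i : Fin n ⊕ (Fin m × Fin k)), (1 : Fin 2)), ((inr (g i) : Fin n ⊕ (Fin m × Fin k)), (1 : Fin 2)))) ∨
      (∃ q : Fin m × Fin k, q ∉ Finset.univ.image f ∧
        e = s(((inr q : Fin n ⊕ (Fin m × Fin k)), (0 : Fin 2)), ((inr q : Fin n ⊕ (Fin m × Fin k)), (1 : Fin 2)))) := by
  simp [toM, Finset.mem_union, Finset.mem_image, eq_comm, or_assoc]

noncomputable def pf (f g : Fin n → Fin m × Fin k) : BSVert m n k → BSVert m n k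
  | (inl i, ℓ) => if ℓ = 0 then ((inr (f i) : Fin n ⊕ (Fin m × Fin k)), 0) else ((inr (g i) : Fin n ⊕ (Fin m × Fin k)), 1)
  | (inr q, ℓ) =>
    if ℓ = 0 then
      (if h : ∃ i, f i = q then ((inl (Classical.choose h) : Fin n ⊕ (Fin m × Fin k)), 0) else ((inr q : Fin n ⊕ (Fin m × Fin k)), 1))
    else
      (if h : ∃ i, g i = q then ((inl (Classical.choose h) : Fin n ⊕ (Fin m × Fin k)), 1) else ((inr q : Fin n ⊕ (Fin m × Fin k)), 0))

lemma self_pf_mem {f g : Fin n → Fin m × Fin k}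
    (himg : Finset.univ.image f = Finset.univ.image g) (v : BSVert m n k) :
    s(v, pf f g v) ∈ toM f g := by
  obtain ⟨x | q, ℓ⟩ := v
  · fin_cases ℓ
    · exact mem_toM.2 (Or.inl ⟨x, rfl⟩)
    · exact mem_toM.2 (Or.inr (Or.inl ⟨x, rfl⟩))
  · fin_cases ℓ
    · by_cases h : ∃ i, f i = q
      · refine mem_toM.2 (Or.inl ⟨Classical.choose h, ?_⟩)
        rw [pf]; simp [if_pos rfl, dif_pos h, Classical.choose_spec h, Sym2.eq_swap]
      · refine mem_toM.2 (Or.inr (Or.inr ⟨q, by simpa using h, ?_⟩))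
        rw [pf]; simp [if_pos rfl, dif_neg h]
    · by_cases h : ∃ i, g i = q
      · refine mem_toM.2 (Or.inr (Or.inl ⟨Classical.choose h, ?_⟩))
        rw [pf]; simp [dif_pos h, Classical.choose_spec h, Sym2.eq_swap, if_neg one_ne_zero]
      · refine mem_toM.2 (Or.inr (Or.inr ⟨q, by simp [himg]; simpa using h, ?_⟩))
        rw [pf]; simp [dif_neg h, Sym2.eq_swap, if_neg one_ne_zero]

lemma edge_eq_pf {f g : Fin n → Fin m × Fin k} (hf : Function.Injective f)
    (hg : Function.Injective g) (himg : Finset.univ.image f = Finset.univ.image g)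
    {e : Sym2 (BSVert m n k)} (he : e ∈ toM f g) {v : BSVert m n k} (hv : v ∈ e) :
    e = s(v, pf f g v) := by
  rcases mem_toM.1 he with ⟨i, rfl⟩ | ⟨i, rfl⟩ | ⟨q, hq, rfl⟩
  · rcases Sym2.mem_iff.1 hv with rfl | rfl
    · rw [pf]; simp
    · have h : ∃ i', f i' = f i := ⟨i, rfl⟩
      have : Classical.choose h = i := hf (Classical.choose_spec h)
      rw [pf]; simp [if_pos rfl, dif_pos h, this, Sym2.eq_swap]
  · rcases Sym2.mem_iff.1 hv with rfl | rfl
    · rw [pf]; simp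
    · have h : ∃ i', g i' = g i := ⟨i, rfl⟩
      have : Classical.choose h = i := hg (Classical.choose_spec h)
      rw [pf]; simp [if_neg one_ne_zero, dif_pos h, this, Sym2.eq_swap]
  · have hq' : ¬∃ i, f i = q := by simpa using hq
    have hq'' : ¬∃ i, g i = q := by
      have : q ∉ Finset.univ.image g := himg ▸ hq
      simpa using this
    rcases Sym2.mem_iff.1 hv with rfl | rfl
    · rw [pf]; simp [if_pos rfl, dif_neg hq']
    · rw [pf]; simp [if_neg one_ne_zero, dif_neg hq'', Sym2.eq_swap]

lemma toM_isMatching {f g : Fin n → Fin m × Fin k} (hf : Function.Injective f)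
    (hg : Function.Injective g) (himg : Finset.univ.image f = Finset.univ.image g)
    (hzf : ∀ i, A (f i).1 i ≠ 0) (hzg : ∀ i, A (g i).1 i ≠ 0) :
    IsMatchingSet (BSGraph A k) (toM f g) := by
  constructor
  · intro e he
    rcases mem_toM.1 he with ⟨i, rfl⟩ | ⟨i, rfl⟩ | ⟨q, hq, rfl⟩
    · exact (SimpleGraph.mem_edgeSet _).2 ((adj_inl_iff A i 0 _).2 ⟨f i, rfl, hzf i⟩)
    · exact (SimpleGraph.mem_edgeSet _).2 ((adj_inl_iff A i 1 _).2 ⟨g i, rfl, hzg i⟩)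
    · exact (SimpleGraph.mem_edgeSet _).2 ((adj_inr_iff A q 0 _).2 (Or.inr rfl))
  · intro e he e' he' hne v hv hv'
    exact hne ((edge_eq_pf hf hg himg he hv).trans (edge_eq_pf hf hg himg he' hv').symm)

lemma toM_covered {f g : Fin n → Fin m × Fin k}
    (himg : Finset.univ.image f = Finset.univ.image g) :
    coveredBy (toM f g) = Finset.univ := by
  refine Finset.eq_univ_iff_forall.2 fun v => ?_
  unfold coveredBy
  simp only [Finset.mem_filter, Finset.mem_univ, true_and]
  exact ⟨s(v, pf f g v), self_pf_mem himg v, Sym2.mem_mk_left _ _⟩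

lemma mem_toM_level0 {f g : Fin n → Fin m × Fin k} (i : Fin n) (q : Fin m × Fin k) :
    s(((inl i : Fin n ⊕ (Fin m × Fin k)), (0 : Fin 2)), ((inr q : Fin n ⊕ (Fin m × Fin k)), (0 : Fin 2))) ∈ toM f g ↔ f i = q := by
  rw [mem_toM]
  constructor
  · rintro (⟨i', h⟩ | ⟨i', h⟩ | ⟨q', hq', h⟩) <;>
      simp only [Sym2.eq_iff, Prod.mk.injEq, inl.injEq, inr.injEq] at h
    · rcases h with ⟨⟨rfl, -⟩, h2, -⟩ | ⟨⟨h1, -⟩, -⟩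
      · exact h2.symm
      · exact absurd h1 (by simp)
    · rcases h with ⟨⟨-, h0⟩, -⟩ | ⟨⟨h1, -⟩, -⟩
      · exact absurd h0 (by simp [Fin.ext_iff])
      · exact absurd h1 (by simp)
    · rcases h with ⟨⟨h1, -⟩, -⟩ | ⟨⟨h1, -⟩, -⟩ <;> exact absurd h1 (by simp)
  · rintro rfl
    exact Or.inl ⟨i, rfl⟩

lemma toM_pattern {f g : Fin n → Fin m × Fin k} (j : Fin m) :
    BSpattern (toM f g) j
      = (Finset.univ.filter fun t : Fin k => (j, t) ∈ Finset.univ.image f).card := by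
  unfold BSpattern
  congr 1
  apply Finset.filter_congr
  intro t _
  simp only [mem_toM_level0, Finset.mem_image, Finset.mem_univ, true_and, eq_iff_iff]

lemma toM_weight {f g : Fin n → Fin m × Fin k} :
    ∏ e ∈ toM f g, BSedgeWt A e = (∏ i, A (f i).1 i) * ∏ i, A (g i).1 i := by
  unfold toM
  rw [Finset.prod_union, Finset.prod_union]
  · rw [Finset.prod_image, Finset.prod_image, Finset.prod_image]
    · have h1 : ∀ i : Fin n, BSedgeWt A
          s(((inl i : Fin n ⊕ (Fin m × Fin k)), (0 : Fin 2)), ((inr (f i) : Fin n ⊕ (Fin m × Fin k)), (0 : Fin 2))) = A (f i).1 i :=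
        fun i => wt_level A i (f i) 0 0
      have h2 : ∀ i : Fin n, BSedgeWt A
          s(((inl i : Fin n ⊕ (Fin m × Fin k)), (1 : Fin 2)), ((inr (g i) : Fin n ⊕ (Fin m × Fin k)), (1 : Fin 2))) = A (g i).1 i :=
        fun i => wt_level A i (g i) 1 1
      rw [Finset.prod_congr rfl fun i _ => h1 i, Finset.prod_congr rfl fun i _ => h2 i,
        Finset.prod_congr rfl fun q (_ : q ∈ _) => wt_rung A q q 0 1, Finset.prod_const_one,
        mul_one]
    · intro q _ q' _ h
      rw [Sym2.eq_iff] at h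
      rcases h with ⟨h1, -⟩ | ⟨h1, -⟩ <;>
        · simp only [Prod.mk.injEq, inr.injEq] at h1
          exact h1.1
    · intro i _ i' _ h
      rw [Sym2.eq_iff] at h
      rcases h with ⟨h1, -⟩ | ⟨h1, -⟩ <;> simp only [Prod.mk.injEq, inl.injEq] at h1
      · exact h1.1
      · simp at h1
    · intro i _ i' _ h
      rw [Sym2.eq_iff] at h
      rcases h with ⟨h1, -⟩ | ⟨h1, -⟩ <;> simp only [Prod.mk.injEq, inl.injEq] at h1
      · exact h1.1
      · simp at h1
  · rw [Finset.disjoint_left]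
    intro e he hr
    simp only [Finset.mem_image, Finset.mem_univ, true_and] at he hr
    obtain ⟨i, rfl⟩ := he
    obtain ⟨i', h⟩ := hr
    rw [Sym2.eq_iff] at h
    rcases h with ⟨h1, -⟩ | ⟨h1, -⟩ <;> simp [Prod.ext_iff, Fin.ext_iff] at h1
  · rw [Finset.disjoint_left]
    intro e he hr
    simp only [Finset.mem_image, Finset.mem_compl] at hr
    obtain ⟨q, -, rfl⟩ := hr
    rw [Finset.mem_union] at he
    simp only [Finset.mem_image, Finset.mem_univ, true_and] at he
    rcases he with ⟨i, h⟩ | ⟨i, h⟩ <;> rw [Sym2.eq_iff] at h <;>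
      rcases h with ⟨h1, -⟩ | ⟨h1, -⟩ <;> simp [Prod.ext_iff] at h1

lemma matching_structure {M : Finset (Sym2 (BSVert m n k))}
    (hM : IsMatchingSet (BSGraph A k) M) (hcov : coveredBy M = Finset.univ) :
    ∃ f g : Fin n → Fin m × Fin k, Function.Injective f ∧ Function.Injective g ∧
      Finset.univ.image f = Finset.univ.image g ∧ (∀ i, A (f i).1 i ≠ 0) ∧
      (∀ i, A (g i).1 i ≠ 0) ∧ M = toM f g := by
  classical
  -- unique partner
  have hpart : ∀ v : BSVert m n k, ∃ w, s(v, w) ∈ M := by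
    intro v
    have hv : v ∈ coveredBy M := hcov ▸ Finset.mem_univ v
    unfold coveredBy at hv
    simp only [Finset.mem_filter, Finset.mem_univ, true_and] at hv
    obtain ⟨e, heM, hve⟩ := hv
    obtain ⟨w, rfl⟩ := Sym2.mem_iff_exists.1 hve
    exact ⟨w, heM⟩
  choose P hP using hpart
  have huniq : ∀ {v w : BSVert m n k}, s(v, w) ∈ M → w = P v := by
    intro v w hw
    by_contra hne
    have hne' : s(v, w) ≠ s(v, P v) := by
      intro h
      rw [Sym2.eq_iff] at h
      rcases h with ⟨-, h2⟩ | ⟨h1, h2⟩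
      · exact hne h2
      · exact hne (h2.trans h1)
    exact hM.2 _ hw _ (hP v) hne' v (Sym2.mem_mk_left _ _) (Sym2.mem_mk_left _ _)
  have hPP : ∀ v, P (P v) = v := by
    intro v
    have : s(P v, v) ∈ M := by rw [Sym2.eq_swap]; exact hP v
    exact (huniq this).symm
  have hadj : ∀ v, (BSGraph A k).Adj v (P v) := fun v => (hM.1 _ (hP v))
  -- extract f and g
  have hf' : ∀ i : Fin n, ∃ q : Fin m × Fin k,
      P ((inl i : Fin n ⊕ (Fin m × Fin k)), (0 : Fin 2)) = ((inr q : Fin n ⊕ (Fin m × Fin k)), (0 : Fin 2)) ∧ A q.1 i ≠ 0 :=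
    fun i => (adj_inl_iff A i 0 _).1 (hadj _)
  have hg' : ∀ i : Fin n, ∃ q : Fin m × Fin k,
      P ((inl i : Fin n ⊕ (Fin m × Fin k)), (1 : Fin 2)) = ((inr q : Fin n ⊕ (Fin m × Fin k)), (1 : Fin 2)) ∧ A q.1 i ≠ 0 :=
    fun i => (adj_inl_iff A i 1 _).1 (hadj _)
  choose f hf1 hf2 using hf'
  choose g hg1 hg2 using hg'
  have hfinj : Function.Injective f := by
    intro i i' h
    have : P ((inl i : Fin n ⊕ (Fin m × Fin k)), (0 : Fin 2)) = P ((inl i' : Fin n ⊕ (Fin m × Fin k)), (0 : Fin 2)) := by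
      rw [hf1, hf1, h]
    have := congrArg P this
    rw [hPP, hPP] at this
    simpa using this
  have hginj : Function.Injective g := by
    intro i i' h
    have : P ((inl i : Fin n ⊕ (Fin m × Fin k)), (1 : Fin 2)) = P ((inl i' : Fin n ⊕ (Fin m × Fin k)), (1 : Fin 2)) := by
      rw [hg1, hg1, h]
    have := congrArg P this
    rw [hPP, hPP] at this
    simpa using this
  -- characterizations of the partner of R-vertices
  have hr0 : ∀ q : Fin m × Fin k, (∃ i, f i = q) ↔
      P ((inr q : Fin n ⊕ (Fin m × Fin k)), (0 : Fin 2)) ≠ ((inr q : Fin n ⊕ (Fin m × Fin k)), (1 : Fin 2)) := by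
    intro q
    constructor
    · rintro ⟨i, rfl⟩ h
      have h0 : P ((inr (f i) : Fin n ⊕ (Fin m × Fin k)), (0 : Fin 2)) = ((inl i : Fin n ⊕ (Fin m × Fin k)), (0 : Fin 2)) := by
        conv_lhs => rw [← hf1 i, hPP]
      rw [h0] at h
      simp at h
    · intro h
      rcases (adj_inr_iff A q 0 _).1 (hadj ((inr q : Fin n ⊕ (Fin m × Fin k)), (0 : Fin 2))) with ⟨i, hi, -⟩ | hq
      · refine ⟨i, ?_⟩
        have : P ((inl i : Fin n ⊕ (Fin m × Fin k)), (0 : Fin 2)) = ((inr q : Fin n ⊕ (Fin m × Fin k)), (0 : Fin 2)) := by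
          conv_lhs => rw [← hi, hPP]
        rw [hf1 i] at this
        simpa [eq_comm] using this
      · exact absurd hq h
  have hr1 : ∀ q : Fin m × Fin k, (∃ i, g i = q) ↔
      P ((inr q : Fin n ⊕ (Fin m × Fin k)), (1 : Fin 2)) ≠ ((inr q : Fin n ⊕ (Fin m × Fin k)), (0 : Fin 2)) := by
    intro q
    constructor
    · rintro ⟨i, rfl⟩ h
      have h0 : P ((inr (g i) : Fin n ⊕ (Fin m × Fin k)), (1 : Fin 2)) = ((inl i : Fin n ⊕ (Fin m × Fin k)), (1 : Fin 2)) := by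
        conv_lhs => rw [← hg1 i, hPP]
      rw [h0] at h
      simp at h
    · intro h
      rcases (adj_inr_iff A q 1 _).1 (hadj ((inr q : Fin n ⊕ (Fin m × Fin k)), (1 : Fin 2))) with ⟨i, hi, -⟩ | hq
      · refine ⟨i, ?_⟩
        have : P ((inl i : Fin n ⊕ (Fin m × Fin k)), (1 : Fin 2)) = ((inr q : Fin n ⊕ (Fin m × Fin k)), (1 : Fin 2)) := by
          conv_lhs => rw [← hi, hPP]
        rw [hg1 i] at this
        simpa [eq_comm] using this
      · refine absurd ?_ h
        have : ((1 : Fin 2) + 1) = 0 := rfl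
        rw [this] at hq
        exact hq
  have hswap : ∀ q : Fin m × Fin k,
      (P ((inr q : Fin n ⊕ (Fin m × Fin k)), (0 : Fin 2)) = ((inr q : Fin n ⊕ (Fin m × Fin k)), (1 : Fin 2))) ↔
      (P ((inr q : Fin n ⊕ (Fin m × Fin k)), (1 : Fin 2)) = ((inr q : Fin n ⊕ (Fin m × Fin k)), (0 : Fin 2))) := by
    intro q
    constructor <;> intro h
    · have := congrArg P h
      rw [hPP] at this
      exact this.symm
    · have := congrArg P h
      rw [hPP] at this
      exact this.symm
  have himg : Finset.univ.image f = Finset.univ.image g := by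
    ext q
    simp only [Finset.mem_image, Finset.mem_univ, true_and]
    rw [hr0 q, hr1 q, not_iff_not.symm, not_not, not_not, hswap q]
  refine ⟨f, g, hfinj, hginj, himg, hf2, hg2, ?_⟩
  -- M = toM f g
  apply Finset.Subset.antisymm
  · intro e he
    have hne : ∃ v, v ∈ e := ⟨e.out.1, Sym2.out_fst_mem e⟩
    obtain ⟨v, hv⟩ := hne
    obtain ⟨w, rfl⟩ := Sym2.mem_iff_exists.1 hv
    have hw : w = P v := huniq he
    subst hw
    obtain ⟨x | q, ℓ⟩ := v
    · fin_cases ℓ <;> simp only [Fin.zero_eta, Fin.mk_one]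
      · exact mem_toM.2 (Or.inl ⟨x, by rw [hf1]⟩)
      · exact mem_toM.2 (Or.inr (Or.inl ⟨x, by rw [hg1]⟩))
    · fin_cases ℓ <;> simp only [Fin.zero_eta, Fin.mk_one]
      · by_cases hq : ∃ i, f i = q
        · obtain ⟨i, rfl⟩ := hq
          have h0 : P ((inr (f i) : Fin n ⊕ (Fin m × Fin k)), (0 : Fin 2)) = ((inl i : Fin n ⊕ (Fin m × Fin k)), (0 : Fin 2)) := by
            conv_lhs => rw [← hf1 i, hPP]
          rw [h0, Sym2.eq_swap]
          exact mem_toM.2 (Or.inl ⟨i, rfl⟩)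
        · have h0 := not_not.1 ((not_iff_not.2 (hr0 q)).1 hq)
          rw [h0]
          exact mem_toM.2 (Or.inr (Or.inr ⟨q, by simpa using hq, rfl⟩))
      · by_cases hq : ∃ i, g i = q
        · obtain ⟨i, rfl⟩ := hq
          have h0 : P ((inr (g i) : Fin n ⊕ (Fin m × Fin k)), (1 : Fin 2)) = ((inl i : Fin n ⊕ (Fin m × Fin k)), (1 : Fin 2)) := by
            conv_lhs => rw [← hg1 i, hPP]
          rw [h0, Sym2.eq_swap]
          exact mem_toM.2 (Or.inr (Or.inl ⟨i, rfl⟩))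
        · have h0 := not_not.1 ((not_iff_not.2 (hr1 q)).1 hq)
          rw [h0, Sym2.eq_swap]
          refine mem_toM.2 (Or.inr (Or.inr ⟨q, ?_, rfl⟩))
          rw [himg]
          simpa using hq
  · intro e he
    rcases mem_toM.1 he with ⟨i, rfl⟩ | ⟨i, rfl⟩ | ⟨q, hq, rfl⟩
    · rw [← hf1 i]; exact hP _
    · rw [← hg1 i]; exact hP _
    · have hq' : ¬∃ i, f i = q := by simpa using hq
      have h0 := not_not.1 ((not_iff_not.2 (hr0 q)).1 hq')
      rw [← h0]
      exact hP _

lemma sum_fibers (T : Finset (Fin m × Fin k)) :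
    ∑ j : Fin m, (Finset.univ.filter fun t : Fin k => (j, t) ∈ T).card = T.card := by
  rw [Finset.card_eq_sum_card_fiberwise (f := Prod.fst) (t := Finset.univ)
    (fun x _ => Finset.mem_univ _)]
  refine Finset.sum_congr rfl fun j _ => ?_
  refine Finset.card_nbij' (fun t => (j, t)) (fun q => q.2) ?_ ?_ ?_ ?_
  · intro t ht
    simp only [Finset.mem_coe, Finset.mem_filter, Finset.mem_univ, true_and] at ht
    simp [Finset.mem_filter, ht]
  · intro q hq
    simp only [Finset.mem_coe, Finset.mem_filter, Finset.mem_univ, true_and] at hq ⊢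
    obtain ⟨h1, h2⟩ := hq
    obtain ⟨a, b⟩ := q
    cases h2
    exact h1
  · intro t _; rfl
  · intro q hq
    simp only [Finset.mem_coe, Finset.mem_filter] at hq
    obtain ⟨a, b⟩ := q
    obtain ⟨-, h2⟩ := hq
    cases h2
    rfl

/-- `Fs S`: injections with image `S`. -/
noncomputable def Fs {m n k : ℕ} (S : Finset (Fin m × Fin k)) :
    Finset (Fin n → Fin m × Fin k) :=
  Finset.univ.filter fun f => Function.Injective f ∧ Finset.univ.image f = S

/-- `Ssets z`: subsets with fiber cardinalities `z`. -/
noncomputable def Ssets (m n : ℕ) {k : ℕ} (z : Fin m → ℕ) : Finset (Finset (Fin m × Fin k)) :=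
  Finset.univ.filter fun S => ∀ j, (Finset.univ.filter fun t : Fin k => (j, t) ∈ S).card = z j

lemma card_Ssets (z : Fin m → ℕ) :
    (Ssets m n (k := k) z).card = ∏ j, Nat.choose k (z j) := by
  have h1 : (Fintype.piFinset fun j : Fin m => (Finset.univ : Finset (Fin k)).powersetCard (z j)).card
      = ∏ j, Nat.choose k (z j) := by
    rw [Fintype.card_piFinset]
    simp [Finset.card_powersetCard]
  rw [← h1]
  · refine Finset.card_nbij' (fun S => fun j => Finset.univ.filter fun t : Fin k => (j, t) ∈ S)
      (fun J => Finset.univ.filter fun q : Fin m × Fin k => q.2 ∈ J q.1) ?_ ?_ ?_ ?_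
    · intro S hS
      simp only [Finset.mem_coe, Ssets, Finset.mem_filter, Finset.mem_univ, true_and] at hS
      rw [Finset.mem_coe, Fintype.mem_piFinset]
      intro j
      rw [Finset.mem_powersetCard]
      exact ⟨Finset.subset_univ _, hS j⟩
    · intro J hJ
      rw [Finset.mem_coe, Fintype.mem_piFinset] at hJ
      simp only [Finset.mem_coe, Ssets, Finset.mem_filter, Finset.mem_univ, true_and]
      intro j
      have h2 : (Finset.univ.filter fun t : Fin k => t ∈ J j) = J j := by
        ext t
        simp
      rw [h2]
      exact (Finset.mem_powersetCard.1 (hJ j)).2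
    · intro S _
      ext ⟨j, t⟩
      simp
    · intro J _
      funext j
      ext t
      simp

def sigmaSub {α β : Type*} (p : α × β → Prop) :
    (Σ a : α, {b : β // p (a, b)}) ≃ {q : α × β // p q} where
  toFun x := ⟨(x.1, x.2.1), x.2.2⟩
  invFun y := ⟨y.1.1, ⟨y.1.2, by rw [Prod.mk.eta]; exact y.2⟩⟩
  left_inv := fun ⟨j, t, h⟩ => rfl
  right_inv := fun ⟨⟨j, t⟩, h⟩ => rfl

lemma sum_Fs (z : Fin m → ℕ) (hz : ∑ j, z j = n) {S : Finset (Fin m × Fin k)}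
    (hS : ∀ j, (Finset.univ.filter fun t : Fin k => (j, t) ∈ S).card = z j) :
    ∑ f ∈ Fs (n := n) S, ∏ i, A (f i).1 i = permA A z := by
  classical
  have hcardS : S.card = n := by rw [← sum_fibers S]; simp [hS, hz]
  have hcardSig : Fintype.card ((j : Fin m) × Fin (z j)) = n := by
    simp [Fintype.card_sigma, hz]
  let e1 : ∀ j : Fin m, Fin (z j) ≃ {t : Fin k // (j, t) ∈ S} := fun j =>
    (Finset.equivFinOfCardEq (hS j)).symm.trans
      (Equiv.subtypeEquivRight (fun t => by simp))
  let eS : ((j : Fin m) × Fin (z j)) ≃ {q : Fin m × Fin k // q ∈ S} :=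
    (Equiv.sigmaCongrRight e1).trans (sigmaSub _)
  have heS : ∀ x : (j : Fin m) × Fin (z j), (eS x).val.1 = x.1 := fun ⟨j, u⟩ => rfl
  set Ψ : (((j : Fin m) × Fin (z j)) ≃ Fin n) → (Fin n → Fin m × Fin k) :=
    fun σ i => (eS (σ.symm i)).val with hΨ
  have hΨinj : Function.Injective Ψ := by
    intro σ σ' h
    have h2 : ∀ i, σ.symm i = σ'.symm i := by
      intro i
      exact eS.injective (Subtype.ext (congrFun h i))
    have h3 : σ.symm = σ'.symm := Equiv.ext h2
    ext i : 1
    · rw [← σ.symm_symm, h3, σ'.symm_symm]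
  have hFs : Fs (n := n) S = Finset.univ.image Ψ := by
    apply Finset.Subset.antisymm
    · intro f hf
      simp only [Fs, Finset.mem_filter, Finset.mem_univ, true_and] at hf
      obtain ⟨hfinj, hfimg⟩ := hf
      have hmem : ∀ i, f i ∈ S := by
        intro i
        rw [← hfimg]
        exact Finset.mem_image_of_mem f (Finset.mem_univ i)
      set τ : Fin n → ((j : Fin m) × Fin (z j)) := fun i => eS.symm ⟨f i, hmem i⟩ with hτ
      have hτinj : Function.Injective τ := by
        intro i i' h
        have := congrArg (fun x => (eS x).val) h
        simp only [hτ, Equiv.apply_symm_apply] at this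
        exact hfinj this
      have hτbij : Function.Bijective τ := by
        have : Fintype.card (Fin n) = Fintype.card ((j : Fin m) × Fin (z j)) := by
          simp [hcardSig]
        exact (Fintype.bijective_iff_injective_and_card τ).2 ⟨hτinj, this⟩
      refine Finset.mem_image.2 ⟨(Equiv.ofBijective τ hτbij).symm, Finset.mem_univ _, ?_⟩
      funext i
      have : (Equiv.ofBijective τ hτbij).symm.symm i = τ i := rfl
      rw [hΨ]
      simp only [this, hτ, Equiv.symm_symm, Equiv.ofBijective_apply, Equiv.apply_symm_apply]
    · intro f hf
      obtain ⟨σ, -, rfl⟩ := Finset.mem_image.1 hf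
      simp only [Fs, Finset.mem_filter, Finset.mem_univ, true_and]
      constructor
      · intro i i' h
        have : σ.symm i = σ.symm i' := eS.injective (Subtype.ext h)
        simpa using congrArg σ this
      · apply Finset.eq_of_subset_of_card_le
        · intro q hq
          obtain ⟨i, -, rfl⟩ := Finset.mem_image.1 hq
          exact (eS (σ.symm i)).2
        · rw [hcardS, Finset.card_image_of_injective _
            (fun i i' h => by simpa using congrArg σ (eS.injective (Subtype.ext h)))]
          simp
  rw [hFs, Finset.sum_image (fun σ _ σ' _ h => hΨinj h)]
  unfold permA
  refine Finset.sum_congr rfl fun σ _ => Finset.prod_congr rfl fun i _ => ?_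
  rw [hΨ]
  simp only [heS]

lemma mem_toM_level1 {f g : Fin n → Fin m × Fin k} (i : Fin n) (q : Fin m × Fin k) :
    s(((inl i : Fin n ⊕ (Fin m × Fin k)), (1 : Fin 2)), ((inr q : Fin n ⊕ (Fin m × Fin k)), (1 : Fin 2))) ∈ toM f g ↔ g i = q := by
  rw [mem_toM]
  constructor
  · rintro (⟨i', h⟩ | ⟨i', h⟩ | ⟨q', hq', h⟩) <;>
      simp only [Sym2.eq_iff, Prod.mk.injEq, inl.injEq, inr.injEq] at h
    · rcases h with ⟨⟨-, h0⟩, -⟩ | ⟨⟨h1, -⟩, -⟩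
      · exact absurd h0 (by simp [Fin.ext_iff])
      · exact absurd h1 (by simp)
    · rcases h with ⟨⟨rfl, -⟩, h2, -⟩ | ⟨⟨h1, -⟩, -⟩
      · exact h2.symm
      · exact absurd h1 (by simp)
    · rcases h with ⟨⟨h1, -⟩, -⟩ | ⟨⟨h1, -⟩, -⟩ <;> exact absurd h1 (by simp)
  · rintro rfl
    exact Or.inr (Or.inl ⟨i, rfl⟩)

lemma toM_inj {f g f' g' : Fin n → Fin m × Fin k} (h : toM f g = toM f' g') :
    f = f' ∧ g = g' := by
  constructor
  · funext i
    have := (mem_toM_level0 (f := f) (g := g) i (f i)).2 rfl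
    rw [h] at this
    exact ((mem_toM_level0 i (f i)).1 this).symm
  · funext i
    have := (mem_toM_level1 (f := f) (g := g) i (g i)).2 rfl
    rw [h] at this
    exact ((mem_toM_level1 i (g i)).1 this).symm


end Aux

/-- For every `z ∈ Φ_{m,n}`, the total weight of perfect matchings of `H` with pattern
`z` equals `(∏_{j=1}^m C(k, z_j)) · Perm(A_z)²`. Moreover, every perfect matching `M` of
`H` satisfies `|S₁(M)| = n` (its pattern lies in `Φ_{m,n}`). -/
theorem stmt11 {m n : ℕ} (hn : 1 ≤ n) (hnm : n ≤ m) (A : Matrix (Fin m) (Fin n) ℝ)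
    (hA : ∀ j i, 0 ≤ A j i) (k : ℕ) (hk : 1 ≤ k) :
    (∀ z : Fin m → ℕ, (∑ j, z j) = n →
      ∑ M ∈ Finset.univ.filter (fun M : Finset (Sym2 (BSVert m n k)) =>
          IsMatchingSet (BSGraph A k) M ∧ coveredBy M = Finset.univ ∧ BSpattern M = z),
        ∏ e ∈ M, BSedgeWt A e
      = (∏ j, (k.choose (z j) : ℝ)) * permA A z ^ 2) ∧
    (∀ M : Finset (Sym2 (BSVert m n k)),
      IsMatchingSet (BSGraph A k) M → coveredBy M = Finset.univ →
        ∑ j, BSpattern M j = n) := by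
    classical
  constructor
  · intro z hz
    set PG : Finset ((Fin n → Fin m × Fin k) × (Fin n → Fin m × Fin k)) :=
      Finset.univ.filter (fun p => (Function.Injective p.1 ∧ Function.Injective p.2 ∧
        Finset.univ.image p.1 = Finset.univ.image p.2 ∧
        (∀ j, (Finset.univ.filter fun t : Fin k => (j, t) ∈ Finset.univ.image p.1).card = z j)) ∧
        ((∀ i, A (p.1 i).1 i ≠ 0) ∧ (∀ i, A (p.2 i).1 i ≠ 0))) with hPG
    set PB : Finset ((Fin n → Fin m × Fin k) × (Fin n → Fin m × Fin k)) :=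
      Finset.univ.filter (fun p => Function.Injective p.1 ∧ Function.Injective p.2 ∧
        Finset.univ.image p.1 = Finset.univ.image p.2 ∧
        (∀ j, (Finset.univ.filter fun t : Fin k => (j, t) ∈ Finset.univ.image p.1).card = z j)) with hPB
    -- Step A : the matchings are the image of PG
    have hStepA : Finset.univ.filter (fun M : Finset (Sym2 (BSVert m n k)) =>
        IsMatchingSet (BSGraph A k) M ∧ coveredBy M = Finset.univ ∧ BSpattern M = z)
        = PG.image (fun p => toM p.1 p.2) := by
      ext M
      simp only [Finset.mem_filter, Finset.mem_univ, true_and, Finset.mem_image, hPG]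
      constructor
      · rintro ⟨h1, h2, h3⟩
        obtain ⟨f, g, hfinj, hginj, himg, hzf, hzg, rfl⟩ := matching_structure A h1 h2
        refine ⟨(f, g), ⟨⟨hfinj, hginj, himg, fun j => ?_⟩, hzf, hzg⟩, rfl⟩
        have h4 := toM_pattern (f := f) (g := g) j
        rw [h3] at h4
        rw [h4]
        congr 1
        ext t
        simp [Finset.mem_image]
      · rintro ⟨⟨f, g⟩, ⟨⟨hfinj, hginj, himg, hpat⟩, hzf, hzg⟩, rfl⟩
        refine ⟨toM_isMatching A hfinj hginj himg hzf hzg, toM_covered himg, ?_⟩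
        funext j
        rw [toM_pattern, ← hpat j]
        congr 1
        ext t
        simp [Finset.mem_image]
    rw [hStepA, Finset.sum_image (fun p _ p' _ h => by
      obtain ⟨h1, h2⟩ := toM_inj h
      exact Prod.ext h1 h2)]
    have hStepB : ∀ p ∈ PG, ∏ e ∈ toM p.1 p.2, BSedgeWt A e
        = (∏ i, A (p.1 i).1 i) * ∏ i, A (p.2 i).1 i := fun p _ => toM_weight A
    rw [Finset.sum_congr rfl hStepB]
    -- Step C : drop the nonzero conditions
    have hPGB : PG = PB.filter (fun p => (∀ i, A (p.1 i).1 i ≠ 0) ∧ (∀ i, A (p.2 i).1 i ≠ 0)) := by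
      rw [hPG, hPB, Finset.filter_filter]
    have hStepC : ∑ p ∈ PG, (∏ i, A (p.1 i).1 i) * ∏ i, A (p.2 i).1 i
        = ∑ p ∈ PB, (∏ i, A (p.1 i).1 i) * ∏ i, A (p.2 i).1 i := by
      rw [hPGB]
      refine Finset.sum_filter_of_ne fun p _ hne => ?_
      have h1 : (∏ i, A (p.1 i).1 i) ≠ 0 := fun h => hne (by rw [h, zero_mul])
      have h2 : (∏ i, A (p.2 i).1 i) ≠ 0 := fun h => hne (by rw [h, mul_zero])
      exact ⟨fun i => Finset.prod_ne_zero_iff.1 h1 i (Finset.mem_univ i),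
        fun i => Finset.prod_ne_zero_iff.1 h2 i (Finset.mem_univ i)⟩
    rw [hStepC]
    -- Step D : fiber over the common image S
    have hmaps : ∀ p ∈ PB, Finset.univ.image p.1 ∈ Ssets m n (k := k) z := by
      intro p hp
      rw [hPB, Finset.mem_filter] at hp
      obtain ⟨-, -, -, -, hpat⟩ := hp
      rw [Ssets, Finset.mem_filter]
      exact ⟨Finset.mem_univ _, hpat⟩
    rw [← Finset.sum_fiberwise_of_maps_to hmaps]
    -- Step E : each fiber is a product Fs S ×ˢ Fs S
    have hStepE : ∀ S ∈ Ssets m n (k := k) z,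
        PB.filter (fun p => Finset.univ.image p.1 = S) = Fs (n := n) S ×ˢ Fs (n := n) S := by
      intro S hS
      rw [Ssets, Finset.mem_filter] at hS
      ext p
      simp only [Finset.mem_filter, Finset.mem_product, Fs, Finset.mem_univ, true_and, hPB]
      constructor
      · rintro ⟨⟨h1, h2, h3, -⟩, h5⟩
        exact ⟨⟨h1, h5⟩, ⟨h2, h3 ▸ h5⟩⟩
      · rintro ⟨⟨h1, h5⟩, h2, h6⟩
        exact ⟨⟨h1, h2, h5.trans h6.symm, fun j => by rw [h5]; exact hS.2 j⟩, h5⟩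
    rw [Finset.sum_congr rfl fun S hS => by rw [hStepE S hS]]
    -- Step F : evaluate each fiber sum
    have hStepF : ∀ S ∈ Ssets m n (k := k) z,
        ∑ p ∈ Fs (n := n) S ×ˢ Fs (n := n) S, (∏ i, A (p.1 i).1 i) * ∏ i, A (p.2 i).1 i
          = permA A z ^ 2 := by
      intro S hS
      rw [Ssets, Finset.mem_filter] at hS
      rw [Finset.sum_product]
      simp only
      rw [← Finset.sum_mul_sum]
      rw [sum_Fs A z hz hS.2, sq]
    rw [Finset.sum_congr rfl hStepF, Finset.sum_const, nsmul_eq_mul, card_Ssets]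
    push_cast
    ring
  · intro M hM hcov
    obtain ⟨f, g, hfinj, -, -, -, -, rfl⟩ := matching_structure A hM hcov
    have : ∀ j, BSpattern (toM f g) j
        = (Finset.univ.filter fun t : Fin k => (j, t) ∈ Finset.univ.image f).card :=
      fun j => toM_pattern j
    rw [Finset.sum_congr rfl fun j _ => this j, sum_fibers,
      Finset.card_image_of_injective _ hfinj]
    simp
end

section
/- Let A be a nonnegative m×n real matrix (1≤n≤m) such that Σ_{z∈Φ_{m,n}} Perm(A_z)²/∏_j z_j! > 0, let ε ∈ (0,1), and set k = ⌈4n²/ε⌉. Let μ_BS be the probability distribution on Φ_{m,n} with μ_BS(z) ∝ Perm(A_z)²/∏_{j=1}^m z_j!, and let ν be the probability distribution on Φ_{m,n} with ν(z) ∝ (∏_{j=1}^m C(k,z_j))·Perm(A_z)², where C(k,z_j) is the binomial coefficient. Then dist_TV(ν, μ_BS) ≤ ε/2. -/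
open scoped Classical

/-- If `0 ≤ f i ≤ 1` on `s`, then `1 - ∑ (1 - f i) ≤ ∏ f i`. -/
lemma one_sub_sum_le_prod {α : Type*} (s : Finset α) (f : α → ℝ)
    (h0 : ∀ i ∈ s, 0 ≤ f i) (h1 : ∀ i ∈ s, f i ≤ 1) :
    1 - ∑ i ∈ s, (1 - f i) ≤ ∏ i ∈ s, f i := by
  induction s using Finset.cons_induction with
  | empty => simp
  | cons a s ha ih =>
    rw [Finset.sum_cons, Finset.prod_cons]
    have h0a := h0 a (Finset.mem_cons_self a s)
    have h1a := h1 a (Finset.mem_cons_self a s)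
    have hs0 : 0 ≤ ∑ i ∈ s, (1 - f i) := Finset.sum_nonneg fun i hi => by
      have := h1 i (Finset.mem_cons_of_mem hi); linarith
    have ih' := ih (fun i hi => h0 i (Finset.mem_cons_of_mem hi))
      (fun i hi => h1 i (Finset.mem_cons_of_mem hi))
    have e1 := mul_le_mul_of_nonneg_left ih' h0a
    have e2 := mul_le_mul_of_nonneg_right h1a hs0
    nlinarith

lemma aux_div_sub_div (x aa ss : ℝ) (ha : aa ≠ 0) (hs : ss ≠ 0) :
    x / (aa * ss) - x / ss = x * (1 - aa) / (aa * ss) := by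
  field_simp

lemma aux_sub_mul_div (x aa ss : ℝ) (hs : ss ≠ 0) :
    x / ss - x * aa / ss = x * (1 - aa) / ss := by
  field_simp

lemma aux_mul_div_cancel (s aa e : ℝ) (hs : s ≠ 0) (ha : aa ≠ 0) :
    s * (e / 4 / (aa * s)) = e / (4 * aa) := by
  field_simp

set_option maxHeartbeats 1000000 in
/-- Let `A` be a nonnegative `m × n` real matrix (`1 ≤ n ≤ m`) with
`Σ_{z ∈ Φ_{m,n}} Perm(A_z)²/∏_j z_j! > 0`, let `ε ∈ (0,1)`, and set `k = ⌈4n²/ε⌉`.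
Let `μ_BS` be the distribution on `Φ_{m,n}` (the tuples in `ℕ^m` summing to `n`) with
`μ_BS(z) ∝ Perm(A_z)²/∏_j z_j!`, and let `ν` be the distribution on `Φ_{m,n}` with
`ν(z) ∝ (∏_j C(k, z_j))·Perm(A_z)²`. Then `dist_TV(ν, μ_BS) ≤ ε/2`. -/
theorem stmt14 {m n : ℕ} (hn : 1 ≤ n) (hnm : n ≤ m) (A : Matrix (Fin m) (Fin n) ℝ)
    (hA : ∀ j i, 0 ≤ A j i) (ε : ℝ) (hε : ε ∈ Set.Ioo (0 : ℝ) 1) (k : ℕ)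
    (hk : k = ⌈4 * (n : ℝ) ^ 2 / ε⌉₊)
    (hpos : 0 < ∑ z ∈ Finset.Nat.antidiagonalTuple m n,
        permA A z ^ 2 / ∏ j, ((z j).factorial : ℝ))
    (μBS ν : (Fin m → ℕ) → ℝ)
    (hμBS : ∀ z ∈ Finset.Nat.antidiagonalTuple m n,
      μBS z = (permA A z ^ 2 / ∏ j, ((z j).factorial : ℝ)) /
        ∑ y ∈ Finset.Nat.antidiagonalTuple m n,
          permA A y ^ 2 / ∏ j, ((y j).factorial : ℝ))
    (hν : ∀ z ∈ Finset.Nat.antidiagonalTuple m n,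
      ν z = ((∏ j, (k.choose (z j) : ℝ)) * permA A z ^ 2) /
        ∑ y ∈ Finset.Nat.antidiagonalTuple m n,
          (∏ j, (k.choose (y j) : ℝ)) * permA A y ^ 2) :
    (1 / 2) * ∑ z ∈ Finset.Nat.antidiagonalTuple m n, |ν z - μBS z| ≤ ε / 2 := by
  classical
  obtain ⟨hε0, hε1⟩ := hε
  set Φ := Finset.Nat.antidiagonalTuple m n with hΦ
  set u : (Fin m → ℕ) → ℝ := fun z => permA A z ^ 2 / ∏ j, ((z j).factorial : ℝ)
    with hudef
  have hu0 : ∀ z, 0 ≤ u z := fun z => by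
    apply div_nonneg (sq_nonneg _)
    exact Finset.prod_nonneg fun j _ => by positivity
  set S : ℝ := ∑ z ∈ Φ, u z with hSdef
  have hS : 0 < S := hpos
  have hn1 : (1 : ℝ) ≤ n := by exact_mod_cast hn
  have hkR : 4 * (n : ℝ) ^ 2 / ε ≤ k := hk ▸ Nat.le_ceil _
  have hkpos : 0 < (k : ℝ) := lt_of_lt_of_le (by positivity) hkR
  have hεk : 4 * (n : ℝ) ^ 2 ≤ ε * k := by
    have := (div_le_iff₀ hε0).mp hkR; linarith
  have hknR : (n : ℝ) ≤ k := by nlinarith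
  have hkn : n ≤ k := by exact_mod_cast hknR
  have hzj : ∀ z ∈ Φ, ∀ j, z j ≤ n := by
    intro z hz j
    rw [hΦ, Finset.Nat.mem_antidiagonalTuple] at hz
    exact hz ▸ Finset.single_le_sum (f := fun j => z j)
      (fun i _ => Nat.zero_le _) (Finset.mem_univ j)
  have hsum : ∀ z ∈ Φ, ∑ j, z j = n := by
    intro z hz; rwa [hΦ, Finset.Nat.mem_antidiagonalTuple] at hz
  set W : (Fin m → ℕ) → ℝ := fun z => ∏ j, ((k.descFactorial (z j) : ℕ) : ℝ) with hWdef
  have hW0 : ∀ z, 0 ≤ W z := fun z => Finset.prod_nonneg fun j _ => by positivity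
  -- upper bound on W
  have hWle : ∀ z ∈ Φ, W z ≤ (k : ℝ) ^ n := by
    intro z hz
    calc W z ≤ ∏ j, ((k : ℝ)) ^ (z j) := by
          apply Finset.prod_le_prod (fun j _ => by positivity)
          intro j _
          exact_mod_cast Nat.descFactorial_le_pow k (z j)
      _ = (k : ℝ) ^ (∑ j, z j) := Finset.prod_pow_eq_pow_sum _ _ _
      _ = (k : ℝ) ^ n := by rw [hsum z hz]
  -- lower bound on W
  have hWge : ∀ z ∈ Φ, (1 - ε / 4) * (k : ℝ) ^ n ≤ W z := by
    intro z hz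
    have hcast : ∀ j : Fin m, ((k.descFactorial (z j) : ℕ) : ℝ)
        = ∏ i ∈ Finset.range (z j), ((k : ℝ) - i) := by
      intro j
      rw [Nat.descFactorial_eq_prod_range, Nat.cast_prod]
      refine Finset.prod_congr rfl fun i hi => ?_
      have hik : i ≤ k := le_trans (le_of_lt (Finset.mem_range.mp hi))
        (le_trans (hzj z hz j) hkn)
      exact Nat.cast_sub hik
    set s := Finset.univ.sigma (fun j : Fin m => Finset.range (z j)) with hsdef
    have hcard : s.card = n := by
      rw [hsdef, Finset.card_sigma]
      simp only [Finset.card_range]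
      exact hsum z hz
    have hmem : ∀ p ∈ s, ((p.2 : ℕ) : ℝ) ≤ (n : ℝ) - 1 ∧ 0 ≤ (k : ℝ) - p.2 := by
      intro p hp
      rw [hsdef, Finset.mem_sigma] at hp
      have h2 : p.2 < z p.1 := Finset.mem_range.mp hp.2
      have h3 : p.2 + 1 ≤ n := Nat.succ_le_of_lt (lt_of_lt_of_le h2 (hzj z hz p.1))
      have h3R : ((p.2 : ℕ) : ℝ) + 1 ≤ (n : ℝ) := by exact_mod_cast h3
      constructor
      · linarith
      · have : ((p.2 : ℕ) : ℝ) ≤ k := by linarith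
        linarith
    have key := one_sub_sum_le_prod s (fun p => ((k : ℝ) - p.2) / k)
      (fun p hp => div_nonneg (hmem p hp).2 hkpos.le)
      (fun p hp => by
        rw [div_le_one hkpos]
        have h2 : (0 : ℝ) ≤ (p.2 : ℝ) := Nat.cast_nonneg _
        linarith)
    have hprod : ∏ p ∈ s, ((k : ℝ) - p.2) / k = W z / (k : ℝ) ^ n := by
      rw [Finset.prod_div_distrib, Finset.prod_const, hcard, hWdef]
      congr 1
      rw [hsdef, Finset.prod_sigma]
      exact (Finset.prod_congr rfl fun j _ => (hcast j).symm)
    have hsumb : ∑ p ∈ s, (1 - ((k : ℝ) - p.2) / k) ≤ ε / 4 := by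
      have step : ∀ p ∈ s, 1 - ((k : ℝ) - p.2) / k ≤ ((n : ℝ) - 1) / k := by
        intro p hp
        have h1 := (hmem p hp).1
        have h2 : (1 : ℝ) - ((k : ℝ) - p.2) / k = (p.2 : ℝ) / k := by field_simp; ring
        rw [h2, div_le_div_iff₀ hkpos hkpos]
        nlinarith
      calc ∑ p ∈ s, (1 - ((k : ℝ) - p.2) / k) ≤ ∑ p ∈ s, ((n : ℝ) - 1) / k :=
            Finset.sum_le_sum step
        _ = (n : ℝ) * (((n : ℝ) - 1) / k) := by
            rw [Finset.sum_const, hcard]; ring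
        _ ≤ ε / 4 := by
            rw [show (n : ℝ) * (((n : ℝ) - 1) / k) = ((n : ℝ) * ((n : ℝ) - 1)) / k from
              (mul_div_assoc _ _ _).symm, div_le_div_iff₀ hkpos (by norm_num : (0:ℝ) < 4)]
            nlinarith
    have h1 : 1 - ε / 4 ≤ W z / (k : ℝ) ^ n := by
      rw [← hprod]; linarith [key]
    have hkn0 : (0 : ℝ) < (k : ℝ) ^ n := by positivity
    calc (1 - ε / 4) * (k : ℝ) ^ n ≤ (W z / (k : ℝ) ^ n) * (k : ℝ) ^ n :=
          mul_le_mul_of_nonneg_right h1 hkn0.le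
      _ = W z := by field_simp
  -- numerator identity
  have hnum : ∀ z ∈ Φ, (∏ j, (k.choose (z j) : ℝ)) * permA A z ^ 2 = W z * u z := by
    intro z hz
    have hfact : ∀ j : Fin m, ((z j).factorial : ℝ) ≠ 0 := fun j => by positivity
    have hchoose : ∀ j : Fin m, (k.choose (z j) : ℝ)
        = ((k.descFactorial (z j) : ℕ) : ℝ) / ((z j).factorial : ℝ) := by
      intro j
      rw [Nat.descFactorial_eq_factorial_mul_choose, Nat.cast_mul]
      field_simp
    rw [Finset.prod_congr rfl fun j _ => hchoose j, Finset.prod_div_distrib]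
    rw [hWdef, hudef]
    have hprodfact : (∏ j, ((z j).factorial : ℝ)) ≠ 0 :=
      Finset.prod_ne_zero_iff.mpr fun j _ => hfact j
    field_simp
  -- the normalizing constant of ν
  set C : ℝ := ∑ z ∈ Φ, W z * u z with hCdef
  have hTC : ∑ y ∈ Φ, (∏ j, (k.choose (y j) : ℝ)) * permA A y ^ 2 = C :=
    Finset.sum_congr rfl fun y hy => hnum y hy
  set a : ℝ := 1 - ε / 4 with hadef
  have ha0 : 0 < a := by rw [hadef]; linarith
  have ha1 : a ≤ 1 := by rw [hadef]; linarith
  have hClow : a * ((k : ℝ) ^ n * S) ≤ C := by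
    rw [hSdef, Finset.mul_sum, Finset.mul_sum, hCdef]
    refine Finset.sum_le_sum fun z hz => ?_
    linarith [mul_le_mul_of_nonneg_right (hWge z hz) (hu0 z)]
  have hChigh : C ≤ (k : ℝ) ^ n * S := by
    rw [hSdef, Finset.mul_sum, hCdef]
    refine Finset.sum_le_sum fun z hz => ?_
    exact mul_le_mul_of_nonneg_right (hWle z hz) (hu0 z)
  have hkn0 : (0 : ℝ) < (k : ℝ) ^ n := by positivity
  have hCpos : 0 < C := lt_of_lt_of_le (mul_pos ha0 (mul_pos hkn0 hS)) hClow
  -- pointwise bound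
  have key : ∀ z ∈ Φ, |ν z - μBS z| ≤ u z * (ε / 4) / (a * S) := by
    intro z hz
    have hν' : ν z = W z * u z / C := by rw [hν z hz, hTC, hnum z hz]
    have hμ' : μBS z = u z / S := hμBS z hz
    rw [hν', hμ', abs_sub_le_iff]
    have haS : 0 < a * S := mul_pos ha0 hS
    constructor
    · have e1 : W z * u z / C ≤ u z / (a * S) := by
        rw [div_le_div_iff₀ hCpos haS]
        have hA1 := mul_le_mul_of_nonneg_right (hWle z hz) (mul_nonneg (hu0 z) haS.le)
        have hA2 := mul_le_mul_of_nonneg_left hClow (hu0 z)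
        nlinarith [hA1, hA2]
      have ha4 : (1 : ℝ) - a = ε / 4 := by rw [hadef]; ring
      have id1 : u z / (a * S) - u z / S = u z * (ε / 4) / (a * S) := by
        rw [← ha4]; exact aux_div_sub_div (u z) a S ha0.ne' hS.ne'
      linarith
    · have e2 : u z * a / S ≤ W z * u z / C := by
        rw [div_le_div_iff₀ hS hCpos]
        have hB1 := mul_le_mul_of_nonneg_left hChigh (mul_nonneg (hu0 z) ha0.le)
        have hB2 := mul_le_mul_of_nonneg_right (hWge z hz) (mul_nonneg (hu0 z) hS.le)
        nlinarith [hB1, hB2]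
      have ha4 : (1 : ℝ) - a = ε / 4 := by rw [hadef]; ring
      have id2 : u z / S - u z * a / S = u z * (ε / 4) / S := by
        rw [← ha4]; exact aux_sub_mul_div (u z) a S hS.ne'
      have e3 : u z * (ε / 4) / S ≤ u z * (ε / 4) / (a * S) := by
        rw [div_le_div_iff₀ hS haS]
        have hB3 := mul_le_mul_of_nonneg_left (mul_le_of_le_one_left hS.le ha1)
          (mul_nonneg (hu0 z) (by linarith : (0:ℝ) ≤ ε / 4))
        nlinarith [hB3]
      linarith
  -- sum up
  have hsumle : ∑ z ∈ Φ, |ν z - μBS z| ≤ ε := by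
    calc ∑ z ∈ Φ, |ν z - μBS z| ≤ ∑ z ∈ Φ, u z * (ε / 4) / (a * S) :=
          Finset.sum_le_sum key
      _ = S * ((ε / 4) / (a * S)) := by
          rw [hSdef, Finset.sum_mul]
          exact Finset.sum_congr rfl fun z _ => by ring
      _ = ε / (4 * a) := aux_mul_div_cancel S a ε hS.ne' ha0.ne'
      _ ≤ ε := by
          rw [div_le_iff₀ (by positivity : (0:ℝ) < 4 * a)]
          nlinarith [mul_nonneg hε0.le (show (0:ℝ) ≤ 4 * a - 1 by rw [hadef]; linarith)]
  linarith
end
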